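/- Plücker relation for determinants: let A and B be p×p matrices over a commutative ring, and fix indices 1 ≤ r₁ < r₂ < ... < r_k ≤ p. Then det(A)·det(B) equals the sum over all 1 ≤ s₁ < ... < s_k ≤ p of det(A')·det(B'), where A' is obtained from A by replacing its rows r₁,...,r_k with rows s₁,...,s_k of B (in this order), and B' is obtained from B by replacing its rows s₁,...,s_k with rows r₁,...,r_k of A (in this order). -/

import Mathlib

open scoped Classical

set_option linter.unusedSectionVars false
namespace PlueckerAux

open Matrix Function Equiv

variable {R : Type*} [CommRing R] {p k : ℕ}

/-- The matrix `A` with, for each `a`, row `r a` replaced by `u a`. -/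
noncomputable def N (A : Matrix (Fin p) (Fin p) R) (r : Fin k → Fin p) (u : Fin k → Fin p → R) :
    Matrix (Fin p) (Fin p) R :=
  Matrix.of fun i j => if h : ∃ a, r a = i then u h.choose j else A i j

theorem N_row_mem (A : Matrix (Fin p) (Fin p) R) {r : Fin k → Fin p}
    (hr : Function.Injective r) (u : Fin k → Fin p → R) (a : Fin k) :
    N A r u (r a) = u a := by
  funext j
  have h : ∃ b, r b = r a := ⟨a, rfl⟩
  have hc : h.choose = a := hr h.choose_spec
  simp only [N, Matrix.of_apply, dif_pos h, hc]

theorem N_row_not (A : Matrix (Fin p) (Fin p) R) {r : Fin k → Fin p} (u : Fin k → Fin p → R)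
    {i : Fin p} (hi : ¬ ∃ a, r a = i) : N A r u i = A i := by
  funext j
  simp only [N, Matrix.of_apply, dif_neg hi]

theorem N_self (A : Matrix (Fin p) (Fin p) R) (r : Fin k → Fin p) :
    N A r (fun a => A (r a)) = A := by
  funext i j
  by_cases h : ∃ a, r a = i
  · simp only [N, Matrix.of_apply, dif_pos h, h.choose_spec]
  · simp only [N, Matrix.of_apply, dif_neg h]

theorem N_update (A : Matrix (Fin p) (Fin p) R) {r : Fin k → Fin p}
    (hr : Function.Injective r) (u : Fin k → Fin p → R) (a : Fin k) (x : Fin p → R) :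
    N A r (Function.update u a x) = (N A r u).updateRow (r a) x := by
  funext i j
  by_cases h : ∃ b, r b = i
  · obtain ⟨b, rfl⟩ := h
    by_cases hba : b = a
    · subst hba
      rw [N_row_mem A hr _ b, Function.update_self, Matrix.updateRow_self]
    · rw [N_row_mem A hr _ b, Matrix.updateRow_ne (fun hc => hba (hr hc)),
        N_row_mem A hr u b, Function.update_of_ne hba]
  · rw [N_row_not A _ h, Matrix.updateRow_ne (fun hc => h ⟨a, hc.symm⟩), N_row_not A u h]


theorem det_comp_perm (M : Matrix (Fin p) (Fin p) R) (π : Equiv.Perm (Fin p)) :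
    Matrix.det (Matrix.of fun i => M (π i)) = (Equiv.Perm.sign π : ℤ) * M.det := by
  have := Matrix.det_permute π M
  simpa [Matrix.submatrix] using this

/-- Permuting the replacement rows multiplies the determinant by the sign. -/
theorem det_N_comp_perm (A : Matrix (Fin p) (Fin p) R) {r : Fin k → Fin p}
    (hr : Function.Injective r) (u : Fin k → Fin p → R) (σ : Equiv.Perm (Fin k)) :
    (N A r (u ∘ σ)).det = (Equiv.Perm.sign σ : ℤ) * (N A r u).det := by
  classical
  let π : Equiv.Perm (Fin p) := σ.extendDomain (Equiv.ofInjective r hr)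
  have hπr : ∀ a, π (r a) = r (σ a) := by
    intro a
    have := Equiv.Perm.extendDomain_apply_image σ (Equiv.ofInjective r hr) a
    simpa [Equiv.ofInjective_apply] using this
  have hπn : ∀ i, (¬ ∃ a, r a = i) → π i = i := by
    intro i hi
    exact Equiv.Perm.extendDomain_apply_not_subtype σ (Equiv.ofInjective r hr)
      (by simpa [Set.range] using hi)
  have hm : N A r (u ∘ σ) = Matrix.of fun i => (N A r u) (π i) := by
    funext i j
    by_cases h : ∃ a, r a = i
    · obtain ⟨a, rfl⟩ := h
      rw [N_row_mem A hr _ a]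
      show u (σ a) j = (N A r u) (π (r a)) j
      rw [hπr a, N_row_mem A hr u (σ a)]
    · rw [N_row_not A _ h]
      show A i j = (N A r u) (π i) j
      rw [hπn i h, N_row_not A u h]
  rw [hm, det_comp_perm, Equiv.Perm.sign_extendDomain]


/-- Reparametrizing the replaced positions multiplies the determinant by the sign. -/
theorem det_N_reparam (y : Matrix (Fin p) (Fin p) R) {s : Fin k → Fin p}
    (hs : Function.Injective s) (w : Fin k → Fin p → R) (σ : Equiv.Perm (Fin k)) :
    (N y (s ∘ σ) w).det = (Equiv.Perm.sign σ : ℤ) * (N y s w).det := by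
  classical
  have hsσ : Function.Injective (s ∘ σ) := hs.comp σ.injective
  let π : Equiv.Perm (Fin p) := σ⁻¹.extendDomain (Equiv.ofInjective s hs)
  have hπs : ∀ b, π (s b) = s (σ⁻¹ b) := by
    intro b
    have := Equiv.Perm.extendDomain_apply_image σ⁻¹ (Equiv.ofInjective s hs) b
    simpa [Equiv.ofInjective_apply] using this
  have hπn : ∀ i, (¬ ∃ a, s a = i) → π i = i := by
    intro i hi
    exact Equiv.Perm.extendDomain_apply_not_subtype σ⁻¹ (Equiv.ofInjective s hs)
      (by simpa [Set.range] using hi)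
  have hm : N y (s ∘ σ) w = Matrix.of fun i => (N y s w) (π i) := by
    funext i j
    by_cases h : ∃ b, s b = i
    · obtain ⟨b, rfl⟩ := h
      have h1 : s b = (s ∘ σ) (σ⁻¹ b) := by simp
      show (N y (s ∘ σ) w) (s b) j = (N y s w) (π (s b)) j
      rw [h1, N_row_mem y hsσ w (σ⁻¹ b), ← h1, hπs b, N_row_mem y hs w (σ⁻¹ b)]
    · have h' : ¬ ∃ a, (s ∘ σ) a = i := fun ⟨a, ha⟩ => h ⟨σ a, ha⟩
      show (N y (s ∘ σ) w) i j = (N y s w) (π i) j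
      rw [N_row_not y w h', hπn i h, N_row_not y w h]
  rw [hm, det_comp_perm, Equiv.Perm.sign_extendDomain, Equiv.Perm.sign_inv]

/-- The summand of the Plücker relation. -/
noncomputable def f (A : Matrix (Fin p) (Fin p) R) (y : Matrix (Fin p) (Fin p) R)
    (r s : Fin k → Fin p) : R :=
  (N A r (fun a => y (s a))).det * (N y s (fun b => A (r b))).det

theorem sign_cast_mul_self (σ : Equiv.Perm (Fin k)) :
    ((Equiv.Perm.sign σ : ℤ) : R) * ((Equiv.Perm.sign σ : ℤ) : R) = 1 := by
  rw [← Int.cast_mul, ← Units.val_mul, Int.units_mul_self]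
  simp

theorem f_reparam (A y : Matrix (Fin p) (Fin p) R) {r s : Fin k → Fin p}
    (hr : Function.Injective r) (hs : Function.Injective s) (σ : Equiv.Perm (Fin k)) :
    f A y r (s ∘ σ) = f A y r s := by
  have h1 : (fun a => y ((s ∘ σ) a)) = (fun a => y (s a)) ∘ σ := rfl
  unfold f
  rw [h1, det_N_comp_perm A hr _ σ, det_N_reparam y hs _ σ]
  calc ((Equiv.Perm.sign σ : ℤ) : R) * (N A r fun a => y (s a)).det *
        (((Equiv.Perm.sign σ : ℤ) : R) * (N y s fun b => A (r b)).det)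
      = (((Equiv.Perm.sign σ : ℤ) : R) * ((Equiv.Perm.sign σ : ℤ) : R)) *
        ((N A r fun a => y (s a)).det * (N y s fun b => A (r b)).det) := by ring
    _ = (N A r fun a => y (s a)).det * (N y s fun b => A (r b)).det := by
        rw [sign_cast_mul_self]; ring


theorem comp_update_mem (y : Matrix (Fin p) (Fin p) R) {s : Fin k → Fin p}
    (hs : Function.Injective s) (b : Fin k) (x : Fin p → R) :
    (fun a => Function.update y (s b) x (s a)) = Function.update (fun a => y (s a)) b x := by
  funext a
  by_cases hab : a = b
  · subst hab; simp [Function.update_self (f := y)]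
  · rw [Function.update_of_ne (f := y) (fun hc => hab (hs hc)), Function.update_of_ne hab]

theorem comp_update_not (y : Matrix (Fin p) (Fin p) R) {s : Fin k → Fin p} {i : Fin p}
    (hi : ¬ ∃ b, s b = i) (x : Fin p → R) :
    (fun a => Function.update y i x (s a)) = fun a => y (s a) := by
  funext a
  exact Function.update_of_ne (fun hc => hi ⟨a, hc⟩) x y

theorem N_amb_update_mem (y : Matrix (Fin p) (Fin p) R) {s : Fin k → Fin p} {i : Fin p}
    (hi : ∃ b, s b = i) (w : Fin k → Fin p → R) (x : Fin p → R) :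
    N (Function.update y i x) s w = N y s w := by
  funext c j
  by_cases hc : ∃ b, s b = c
  · simp only [N, Matrix.of_apply, dif_pos hc]
  · have hci : c ≠ i := by rintro rfl; exact hc hi
    simp only [N, Matrix.of_apply, dif_neg hc, Function.update_of_ne (f := y) hci]

theorem N_amb_update_not (y : Matrix (Fin p) (Fin p) R) {s : Fin k → Fin p} {i : Fin p}
    (hi : ¬ ∃ b, s b = i) (w : Fin k → Fin p → R) (x : Fin p → R) :
    N (Function.update y i x) s w = (N y s w).updateRow i x := by
  funext c j
  by_cases hci : c = i
  · subst hci
    simp only [N, Matrix.of_apply, dif_neg hi, Function.update_self (f := y), Matrix.updateRow_self]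
  · rw [Matrix.updateRow_ne hci]
    by_cases hc : ∃ b, s b = c
    · simp only [N, Matrix.of_apply, dif_pos hc]
    · simp only [N, Matrix.of_apply, dif_neg hc, Function.update_of_ne (f := y) hci]

theorem f_update_add (A y : Matrix (Fin p) (Fin p) R) {r s : Fin k → Fin p}
    (hr : Function.Injective r) (hs : Function.Injective s) (i : Fin p) (v w : Fin p → R) :
    f A (Function.update y i (v + w)) r s
      = f A (Function.update y i v) r s + f A (Function.update y i w) r s := by
  unfold f
  by_cases hi : ∃ b, s b = i
  · obtain ⟨b, rfl⟩ := hi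
    rw [comp_update_mem y hs b, comp_update_mem y hs b, comp_update_mem y hs b,
      N_amb_update_mem y ⟨b, rfl⟩, N_amb_update_mem y ⟨b, rfl⟩, N_amb_update_mem y ⟨b, rfl⟩,
      N_update A hr _ b, N_update A hr _ b, N_update A hr _ b,
      Matrix.det_updateRow_add, add_mul]
  · rw [comp_update_not y hi, comp_update_not y hi, comp_update_not y hi,
      N_amb_update_not y hi, N_amb_update_not y hi, N_amb_update_not y hi,
      Matrix.det_updateRow_add, mul_add]

theorem f_update_smul (A y : Matrix (Fin p) (Fin p) R) {r s : Fin k → Fin p}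
    (hr : Function.Injective r) (hs : Function.Injective s) (i : Fin p) (c : R) (v : Fin p → R) :
    f A (Function.update y i (c • v)) r s = c * f A (Function.update y i v) r s := by
  unfold f
  by_cases hi : ∃ b, s b = i
  · obtain ⟨b, rfl⟩ := hi
    rw [comp_update_mem y hs b, comp_update_mem y hs b,
      N_amb_update_mem y ⟨b, rfl⟩, N_amb_update_mem y ⟨b, rfl⟩,
      N_update A hr _ b, N_update A hr _ b,
      Matrix.det_updateRow_smul, mul_assoc]
  · rw [comp_update_not y hi, comp_update_not y hi,
      N_amb_update_not y hi, N_amb_update_not y hi,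
      Matrix.det_updateRow_smul]
    ring

theorem f_eq_zero_both (A y : Matrix (Fin p) (Fin p) R) {r s : Fin k → Fin p}
    (hr : Function.Injective r) (hs : Function.Injective s) {i j : Fin p} (hij : i ≠ j)
    (hy : y i = y j) (hi : ∃ b, s b = i) (hj : ∃ b, s b = j) : f A y r s = 0 := by
  obtain ⟨b, rfl⟩ := hi
  obtain ⟨c, hc⟩ := hj
  have hbc : b ≠ c := by rintro rfl; exact hij hc
  have : (N A r (fun a => y (s a))).det = 0 := by
    refine Matrix.det_zero_of_row_eq (M := N A r (fun a => y (s a))) (i := r b) (j := r c)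
      (fun h => hbc (hr h)) ?_
    rw [N_row_mem A hr _ b, N_row_mem A hr _ c, hc, hy]
  rw [f, this, zero_mul]

theorem f_eq_zero_none (A y : Matrix (Fin p) (Fin p) R) {r s : Fin k → Fin p}
    {i j : Fin p} (hij : i ≠ j)
    (hy : y i = y j) (hi : ¬ ∃ b, s b = i) (hj : ¬ ∃ b, s b = j) : f A y r s = 0 := by
  have : (N y s (fun b => A (r b))).det = 0 := by
    refine Matrix.det_zero_of_row_eq (M := N y s (fun b => A (r b))) (i := i) (j := j) hij ?_
    rw [N_row_not y _ hi, N_row_not y _ hj, hy]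
  rw [f, this, mul_zero]

theorem update_injective {s : Fin k → Fin p} (hs : Function.Injective s) (b : Fin k)
    {j : Fin p} (hj : ¬ ∃ c, s c = j) : Function.Injective (Function.update s b j) := by
  intro a a' h
  by_cases ha : a = b <;> by_cases ha' : a' = b
  · rw [ha, ha']
  · exfalso
    rw [ha, Function.update_self, Function.update_of_ne ha'] at h
    exact hj ⟨a', h.symm⟩
  · exfalso
    rw [ha', Function.update_self, Function.update_of_ne ha] at h
    exact hj ⟨a, h⟩
  · rw [Function.update_of_ne ha, Function.update_of_ne ha'] at h
    exact hs h

theorem f_core (A y : Matrix (Fin p) (Fin p) R) {r s : Fin k → Fin p}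
    (hr : Function.Injective r) (hs : Function.Injective s) {i j : Fin p} (hij : i ≠ j)
    (hy : y i = y j) (b : Fin k) (hb : s b = i) (hj : ¬ ∃ c, s c = j) :
    f A y r (Function.update s b j) = - f A y r s := by
  classical
  set s2 := Function.update s b j with hs2def
  have hs2 : Function.Injective s2 := update_injective hs b hj
  have h1 : (fun a => y (s2 a)) = fun a => y (s a) := by
    funext a
    by_cases hab : a = b
    · subst hab
      rw [hs2def, Function.update_self, hb, hy]
    · rw [hs2def, Function.update_of_ne hab]
  have h2 : N y s2 (fun c => A (r c)) =
      Matrix.of fun c => (N y s (fun c => A (r c))) (Equiv.swap i j c) := by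
    funext c jj
    simp only [Matrix.of_apply]
    by_cases hc : ∃ a, s2 a = c
    · obtain ⟨a, rfl⟩ := hc
      by_cases hab : a = b
      · subst hab
        have hsj : s2 a = j := Function.update_self a j s ▸ by simp [hs2def]
        show (N y s2 _) (s2 a) jj = (N y s _) (Equiv.swap i j (s2 a)) jj
        rw [N_row_mem y hs2 _ a, hsj, Equiv.swap_apply_right, ← hb, N_row_mem y hs _ a]
      · have hsa : s2 a = s a := Function.update_of_ne hab j s
        have hne1 : s a ≠ i := fun h => hab (hs (h.trans hb.symm))
        have hne2 : s a ≠ j := fun h => hj ⟨a, h⟩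
        show (N y s2 _) (s2 a) jj = (N y s _) (Equiv.swap i j (s2 a)) jj
        rw [N_row_mem y hs2 _ a, hsa, Equiv.swap_apply_of_ne_of_ne hne1 hne2,
          N_row_mem y hs _ a]
    · by_cases hci : c = i
      · subst hci
        have hcj : ¬ ∃ a, s a = j := hj
        show (N y s2 _) c jj = (N y s _) (Equiv.swap c j c) jj
        rw [N_row_not y _ hc, Equiv.swap_apply_left, N_row_not y _ hcj, hy]
      · have hcj : c ≠ j := by
          rintro rfl
          exact hc ⟨b, Function.update_self b c s⟩
        have hcs : ¬ ∃ a, s a = c := by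
          rintro ⟨a, rfl⟩
          have hab : a ≠ b := fun h => hci (by rw [h]; exact hb)
          exact hc ⟨a, Function.update_of_ne hab j s⟩
        show (N y s2 _) c jj = (N y s _) (Equiv.swap i j c) jj
        rw [N_row_not y _ hc, Equiv.swap_apply_of_ne_of_ne hci hcj, N_row_not y _ hcs]
  have h3 : (N y s2 (fun c => A (r c))).det = - (N y s (fun c => A (r c))).det := by
    rw [h2, det_comp_perm, Equiv.Perm.sign_swap hij]
    simp
  rw [f, f, h1, h3]
  ring


/-- The subtype of strictly monotone maps `Fin k → Fin p`. -/
abbrev Smono (k p : ℕ) := {s : Fin k → Fin p // StrictMono s}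


def imageT (s : Smono k p) : Finset (Fin p) := Finset.image s.1 Finset.univ

theorem mem_imageT {s : Smono k p} {x : Fin p} : x ∈ imageT s ↔ ∃ b, s.1 b = x := by
  simp [imageT]

theorem card_imageT (s : Smono k p) : (imageT s).card = k := by
  rw [imageT, Finset.card_image_of_injective _ s.2.injective, Finset.card_univ,
    Fintype.card_fin]

noncomputable def monoOfFin (T : Finset (Fin p)) (h : T.card = k) : Smono k p :=
  ⟨T.orderEmbOfFin h, (T.orderEmbOfFin h).strictMono⟩

theorem imageT_monoOfFin (T : Finset (Fin p)) (h : T.card = k) :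
    imageT (monoOfFin T h) = T := by
  apply Finset.coe_injective
  rw [imageT, Finset.coe_image, Finset.coe_univ, Set.image_univ]
  exact T.range_orderEmbOfFin h

theorem eq_of_imageT_eq {s t : Smono k p} (h : imageT s = imageT t) : s = t := by
  have h1 : s.1 = (imageT t).orderEmbOfFin (h ▸ card_imageT s) :=
    Finset.orderEmbOfFin_unique _ (fun x => by rw [← h]; exact mem_imageT.2 ⟨x, rfl⟩) s.2
  have h2 : t.1 = (imageT t).orderEmbOfFin (h ▸ card_imageT s) :=
    Finset.orderEmbOfFin_unique _ (fun x => mem_imageT.2 ⟨x, rfl⟩) t.2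
  exact Subtype.ext (h1.trans h2.symm)

theorem range_eq_imageT (s : Smono k p) : Set.range s.1 = ↑(imageT s) := by
  rw [imageT, Finset.coe_image, Finset.coe_univ, Set.image_univ]

/-- Key cancellation lemma: replacing `i` by `j` in the range of `s` negates the summand. -/
theorem f_pair (A y : Matrix (Fin p) (Fin p) R) {r : Fin k → Fin p}
    (hr : Function.Injective r) (s : Smono k p) {i j : Fin p} (hij : i ≠ j)
    (hy : y i = y j) (hi : ∃ b, s.1 b = i) (hj : ¬ ∃ c, s.1 c = j) (t : Smono k p)
    (ht : imageT t = insert j ((imageT s).erase i)) :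
    f A y r t.1 = - f A y r s.1 := by
  classical
  obtain ⟨b, hb⟩ := hi
  set s2 := Function.update s.1 b j with hs2def
  have hs2 : Function.Injective s2 := update_injective s.2.injective b hj
  have hcore : f A y r s2 = - f A y r s.1 :=
    f_core A y hr s.2.injective hij hy b hb hj
  have himg : Finset.image s2 Finset.univ = insert j ((imageT s).erase i) := by
    ext x
    simp only [Finset.mem_image, Finset.mem_univ, true_and, Finset.mem_insert,
      Finset.mem_erase, mem_imageT]
    constructor
    · rintro ⟨a, rfl⟩
      by_cases hab : a = b
      · subst hab; left; rw [hs2def, Function.update_self]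
      · right
        rw [hs2def, Function.update_of_ne hab]
        exact ⟨fun h => hab (s.2.injective (h.trans hb.symm)), ⟨a, rfl⟩⟩
    · rintro (rfl | ⟨hxi, hx⟩)
      · exact ⟨b, by rw [hs2def, Function.update_self]⟩
      · obtain ⟨a, ha⟩ := hx
        have hab : a ≠ b := fun h => hxi (by rw [← ha, h, hb])
        exact ⟨a, by rw [hs2def, Function.update_of_ne hab, ha]⟩
  have hrange : Set.range s2 = Set.range t.1 := by
    rw [range_eq_imageT t, ht, ← himg, Finset.coe_image, Finset.coe_univ, Set.image_univ]
  let σ : Equiv.Perm (Fin k) :=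
    (Equiv.ofInjective s2 hs2).trans ((Equiv.setCongr hrange).trans
      (Equiv.ofInjective t.1 t.2.injective).symm)
  have hcomp : t.1 ∘ σ = s2 := by
    funext a
    show t.1 ((Equiv.ofInjective t.1 t.2.injective).symm
      (Equiv.setCongr hrange (Equiv.ofInjective s2 hs2 a))) = s2 a
    rw [Equiv.apply_ofInjective_symm t.2.injective]
    rfl
  have := f_reparam A y hr t.2.injective σ
  rw [hcomp] at this
  rw [← this, hcore]


def swapFS (i j : Fin p) (T : Finset (Fin p)) : Finset (Fin p) :=
  if i ∈ T ∧ j ∉ T then insert j (T.erase i)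
  else if j ∈ T ∧ i ∉ T then insert i (T.erase j) else T

theorem card_swapFS {i j : Fin p} (hij : i ≠ j) (T : Finset (Fin p)) :
    (swapFS i j T).card = T.card := by
  rw [swapFS]
  split_ifs with h1 h2
  · rw [Finset.card_insert_of_notMem (by simp [h1.2]), Finset.card_erase_add_one h1.1]
  · rw [Finset.card_insert_of_notMem (by simp [h2.2]), Finset.card_erase_add_one h2.1]
  · rfl

theorem swapFS_swapFS {i j : Fin p} (hij : i ≠ j) (T : Finset (Fin p)) :
    swapFS i j (swapFS i j T) = T := by
  by_cases h1 : i ∈ T ∧ j ∉ T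
  · have e1 : swapFS i j T = insert j (T.erase i) := by rw [swapFS, if_pos h1]
    have him : i ∉ insert j (T.erase i) := by simp [hij]
    have hjm : j ∈ insert j (T.erase i) := Finset.mem_insert_self j _
    rw [e1, swapFS, if_neg (fun hc => hc.2 hjm), if_pos ⟨hjm, him⟩,
      Finset.erase_insert (by simp [h1.2]), Finset.insert_erase h1.1]
  · by_cases h2 : j ∈ T ∧ i ∉ T
    · have e1 : swapFS i j T = insert i (T.erase j) := by rw [swapFS, if_neg h1, if_pos h2]
      have hjm : j ∉ insert i (T.erase j) := by simp [Ne.symm hij]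
      have him : i ∈ insert i (T.erase j) := Finset.mem_insert_self i _
      rw [e1, swapFS, if_pos ⟨him, hjm⟩,
        Finset.erase_insert (by simp [h2.2]), Finset.insert_erase h2.1]
    · have e : swapFS i j T = T := by rw [swapFS, if_neg h1, if_neg h2]
      rw [e, e]

noncomputable def gmap (i j : Fin p) (hij : i ≠ j) (s : Smono k p) : Smono k p :=
  monoOfFin (swapFS i j (imageT s)) (by rw [card_swapFS hij, card_imageT])

theorem imageT_gmap (i j : Fin p) (hij : i ≠ j) (s : Smono k p) :
    imageT (gmap i j hij s) = swapFS i j (imageT s) := imageT_monoOfFin _ _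

theorem sum_f_eq_zero (A y : Matrix (Fin p) (Fin p) R) {r : Fin k → Fin p}
    (hr : Function.Injective r) {i j : Fin p} (hij : i ≠ j) (hy : y i = y j) :
    ∑ s : Smono k p, f A y r s.1 = 0 := by
  classical
  have memi : ∀ s : Smono k p, (i ∈ imageT s) = (∃ b, s.1 b = i) := fun s => by
    rw [mem_imageT]
  apply Finset.sum_ninvolution (g := gmap i j hij)
  · -- f s + f (g s) = 0
    intro s
    by_cases hi : ∃ b, s.1 b = i <;> by_cases hjm : ∃ b, s.1 b = j
    · have h0 : f A y r s.1 = 0 := f_eq_zero_both A y hr s.2.injective hij hy hi hjm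
      have hgs : gmap i j hij s = s := by
        apply eq_of_imageT_eq
        rw [imageT_gmap, swapFS,
          if_neg (fun hc => hc.2 (mem_imageT.2 hjm)),
          if_neg (fun hc => hc.2 (mem_imageT.2 hi))]
      rw [hgs, h0, add_zero]
    · have hpair : f A y r (gmap i j hij s).1 = - f A y r s.1 := by
        refine f_pair A y hr s hij hy hi (fun hc => hjm hc) _ ?_
        rw [imageT_gmap, swapFS,
          if_pos ⟨mem_imageT.2 hi, fun hc => hjm (mem_imageT.1 hc)⟩]
      rw [hpair, add_neg_cancel]
    · have hpair : f A y r (gmap i j hij s).1 = - f A y r s.1 := by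
        refine f_pair A y hr s hij.symm hy.symm hjm (fun hc => hi hc) _ ?_
        rw [imageT_gmap, swapFS,
          if_neg (fun hc => hc.2 (mem_imageT.2 hjm)),
          if_pos ⟨mem_imageT.2 hjm, fun hc => hi (mem_imageT.1 hc)⟩]
      rw [hpair, add_neg_cancel]
    · have h0 : f A y r s.1 = 0 := f_eq_zero_none A y hij hy hi hjm
      have hgs : gmap i j hij s = s := by
        apply eq_of_imageT_eq
        rw [imageT_gmap, swapFS,
          if_neg (fun hc => hi (mem_imageT.1 hc.1)),
          if_neg (fun hc => hjm (mem_imageT.1 hc.1))]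
      rw [hgs, h0, add_zero]
  · -- f s ≠ 0 → g s ≠ s
    intro s hfs heq
    by_cases hi : ∃ b, s.1 b = i <;> by_cases hjm : ∃ b, s.1 b = j
    · exact hfs (f_eq_zero_both A y hr s.2.injective hij hy hi hjm)
    · have : j ∈ imageT (gmap i j hij s) := by
        rw [imageT_gmap, swapFS,
          if_pos ⟨mem_imageT.2 hi, fun hc => hjm (mem_imageT.1 hc)⟩]
        exact Finset.mem_insert_self j _
      rw [heq] at this
      exact hjm (mem_imageT.1 this)
    · have : i ∈ imageT (gmap i j hij s) := by
        rw [imageT_gmap, swapFS,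
          if_neg (fun hc => hc.2 (mem_imageT.2 hjm)),
          if_pos ⟨mem_imageT.2 hjm, fun hc => hi (mem_imageT.1 hc)⟩]
        exact Finset.mem_insert_self i _
      rw [heq] at this
      exact hi (mem_imageT.1 this)
    · exact hfs (f_eq_zero_none A y hij hy hi hjm)
  · intro s; exact Finset.mem_univ _
  · intro s
    apply eq_of_imageT_eq
    rw [imageT_gmap, imageT_gmap, swapFS_swapFS hij]


/-- The Plücker sum, as an alternating map in the rows of the second matrix. -/
noncomputable def F (A : Matrix (Fin p) (Fin p) R) (r : Fin k → Fin p) (hr : StrictMono r) :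
    AlternatingMap R (Fin p → R) R (Fin p) where
  toFun y := ∑ s : Smono k p, f A y r s.1
  map_update_add' := by
    intro instD y i x v
    have hinst : instD = instDecidableEqFin p := Subsingleton.elim _ _
    subst hinst
    show (∑ s : Smono k p, f A (Function.update y i (x + v)) r s.1)
        = (∑ s : Smono k p, f A (Function.update y i x) r s.1)
          + ∑ s : Smono k p, f A (Function.update y i v) r s.1
    rw [← Finset.sum_add_distrib]
    exact Finset.sum_congr rfl fun s _ =>
      f_update_add A y hr.injective s.2.injective i x v
  map_update_smul' := by
    intro instD y i c x
    have hinst : instD = instDecidableEqFin p := Subsingleton.elim _ _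
    subst hinst
    show (∑ s : Smono k p, f A (Function.update y i (c • x)) r s.1)
        = c • ∑ s : Smono k p, f A (Function.update y i x) r s.1
    rw [Finset.smul_sum]
    refine Finset.sum_congr rfl fun s _ => ?_
    rw [smul_eq_mul]
    exact f_update_smul A y hr.injective s.2.injective i c x
  map_eq_zero_of_eq' y i j hy hij := sum_f_eq_zero A y hr.injective hij hy

/-- Determinant with rows `r` replaced, as an alternating map in the replacement rows. -/
noncomputable def D2 (A : Matrix (Fin p) (Fin p) R) (r : Fin k → Fin p)
    (hr : Function.Injective r) : AlternatingMap R (Fin p → R) R (Fin k) where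
  toFun u := (N A r u).det
  map_update_add' := by
    intro instD u a x v
    have hinst : instD = instDecidableEqFin k := Subsingleton.elim _ _
    subst hinst
    show (N A r (Function.update u a (x + v))).det
        = (N A r (Function.update u a x)).det + (N A r (Function.update u a v)).det
    rw [N_update A hr, N_update A hr, N_update A hr, Matrix.det_updateRow_add]
  map_update_smul' := by
    intro instD u a c x
    have hinst : instD = instDecidableEqFin k := Subsingleton.elim _ _
    subst hinst
    show (N A r (Function.update u a (c • x))).det = c • (N A r (Function.update u a x)).det
    rw [N_update A hr, N_update A hr, Matrix.det_updateRow_smul, smul_eq_mul]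
  map_eq_zero_of_eq' u a b hab hne :=
    Matrix.det_zero_of_row_eq (fun h => hne (hr h))
      (by rw [N_row_mem A hr u a, N_row_mem A hr u b, hab])

/-- The Laplace-type sum, as an alternating map in the replacement rows. -/
noncomputable def D1 (A : Matrix (Fin p) (Fin p) R) (r : Fin k → Fin p)
    (hr : Function.Injective r) : AlternatingMap R (Fin p → R) R (Fin k) where
  toFun u := ∑ s : Smono k p,
    (N A r (fun a => (1 : Matrix (Fin p) (Fin p) R) (s.1 a))).det *
      (N (1 : Matrix (Fin p) (Fin p) R) s.1 u).det
  map_update_add' := by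
    intro instD u a x v
    have hinst : instD = instDecidableEqFin k := Subsingleton.elim _ _
    subst hinst
    show (∑ s : Smono k p, (N A r (fun a => (1 : Matrix (Fin p) (Fin p) R) (s.1 a))).det *
          (N (1 : Matrix (Fin p) (Fin p) R) s.1 (Function.update u a (x + v))).det)
        = (∑ s : Smono k p, (N A r (fun a => (1 : Matrix (Fin p) (Fin p) R) (s.1 a))).det *
            (N (1 : Matrix (Fin p) (Fin p) R) s.1 (Function.update u a x)).det)
          + ∑ s : Smono k p, (N A r (fun a => (1 : Matrix (Fin p) (Fin p) R) (s.1 a))).det *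
              (N (1 : Matrix (Fin p) (Fin p) R) s.1 (Function.update u a v)).det
    rw [← Finset.sum_add_distrib]
    refine Finset.sum_congr rfl fun s _ => ?_
    rw [N_update _ s.2.injective, N_update _ s.2.injective, N_update _ s.2.injective,
      Matrix.det_updateRow_add, mul_add]
  map_update_smul' := by
    intro instD u a c x
    have hinst : instD = instDecidableEqFin k := Subsingleton.elim _ _
    subst hinst
    show (∑ s : Smono k p, (N A r (fun a => (1 : Matrix (Fin p) (Fin p) R) (s.1 a))).det *
          (N (1 : Matrix (Fin p) (Fin p) R) s.1 (Function.update u a (c • x))).det)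
        = c • ∑ s : Smono k p, (N A r (fun a => (1 : Matrix (Fin p) (Fin p) R) (s.1 a))).det *
            (N (1 : Matrix (Fin p) (Fin p) R) s.1 (Function.update u a x)).det
    rw [Finset.smul_sum]
    refine Finset.sum_congr rfl fun s _ => ?_
    rw [N_update _ s.2.injective, N_update _ s.2.injective,
      Matrix.det_updateRow_smul, smul_eq_mul]
    ring
  map_eq_zero_of_eq' u a b hab hne := by
    refine Finset.sum_eq_zero fun s _ => ?_
    have : (N (1 : Matrix (Fin p) (Fin p) R) s.1 u).det = 0 :=
      Matrix.det_zero_of_row_eq (fun h => hne (s.2.injective h))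
        (by rw [N_row_mem _ s.2.injective u a, N_row_mem _ s.2.injective u b, hab])
    rw [this, mul_zero]

theorem basisFun_rows :
    ⇑(Pi.basisFun R (Fin p)) = fun i => (1 : Matrix (Fin p) (Fin p) R) i := by
  funext i j
  rw [Pi.basisFun_apply, Matrix.one_apply, Pi.single_apply]
  simp [eq_comm]

theorem D1_eq_D2 (A : Matrix (Fin p) (Fin p) R) (r : Fin k → Fin p)
    (hr : Function.Injective r) : D1 A r hr = D2 A r hr := by
  classical
  refine Module.Basis.ext_alternating (Pi.basisFun R (Fin p)) fun v hv => ?_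
  have hrow : (fun a => Pi.basisFun R (Fin p) (v a)) =
      fun a => (1 : Matrix (Fin p) (Fin p) R) (v a) := by
    funext a; rw [basisFun_rows]
  rw [hrow]
  have hcard : (Finset.image v Finset.univ).card = k := by
    rw [Finset.card_image_of_injective _ hv, Finset.card_univ, Fintype.card_fin]
  set s₀ : Smono k p := monoOfFin (Finset.image v Finset.univ) hcard with hs₀def
  have himg : imageT s₀ = Finset.image v Finset.univ := imageT_monoOfFin _ _
  have hrange : Set.range v = Set.range s₀.1 := by
    rw [range_eq_imageT s₀, himg, Finset.coe_image, Finset.coe_univ, Set.image_univ]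
  let σ : Equiv.Perm (Fin k) :=
    (Equiv.ofInjective v hv).trans ((Equiv.setCongr hrange).trans
      (Equiv.ofInjective s₀.1 s₀.2.injective).symm)
  have hcomp : s₀.1 ∘ σ = v := by
    funext a
    show s₀.1 ((Equiv.ofInjective s₀.1 s₀.2.injective).symm
      (Equiv.setCongr hrange (Equiv.ofInjective v hv a))) = v a
    rw [Equiv.apply_ofInjective_symm s₀.2.injective]
    rfl
  have hone : ∀ (w : Fin k → Fin p) (hw : Function.Injective w) (M : Matrix (Fin p) (Fin p) R),
      (fun a => M (w a)) = (fun a => M a) ∘ w := fun _ _ _ => rfl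
  -- right-hand side
  have hD2 : D2 A r hr (fun a => (1 : Matrix (Fin p) (Fin p) R) (v a)) =
      ((Equiv.Perm.sign σ : ℤ) : R) *
        (N A r (fun a => (1 : Matrix (Fin p) (Fin p) R) (s₀.1 a))).det := by
    show (N A r (fun a => (1 : Matrix (Fin p) (Fin p) R) (v a))).det = _
    have : (fun a => (1 : Matrix (Fin p) (Fin p) R) (v a)) =
        (fun a => (1 : Matrix (Fin p) (Fin p) R) (s₀.1 a)) ∘ σ := by
      rw [← hcomp]; rfl
    rw [this, det_N_comp_perm A hr _ σ]
  have hδ : ∀ s : Smono k p, s ≠ s₀ →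
      (N (1 : Matrix (Fin p) (Fin p) R) s.1 (fun a => (1 : Matrix (Fin p) (Fin p) R) (v a))).det
        = 0 := by
    intro s hs
    have hnb : ∃ b, ¬ ∃ a, s.1 a = v b := by
      by_contra hall
      push_neg at hall
      have hsub : Finset.image v Finset.univ ⊆ imageT s := by
        intro x hx
        obtain ⟨b, _, rfl⟩ := Finset.mem_image.1 hx
        obtain ⟨a, ha⟩ := hall b
        exact mem_imageT.2 ⟨a, ha⟩
      have : imageT s = Finset.image v Finset.univ :=
        (Finset.eq_of_subset_of_card_le hsub (by rw [card_imageT, hcard])).symm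
      exact hs (eq_of_imageT_eq (this.trans himg.symm))
    obtain ⟨b, hnb⟩ := hnb
    refine Matrix.det_zero_of_row_eq (i := s.1 b) (j := v b) (fun h => hnb ⟨b, h⟩) ?_
    rw [N_row_mem _ s.2.injective _ b, N_row_not _ _ hnb]
  have hs₀term :
      (N (1 : Matrix (Fin p) (Fin p) R) s₀.1 (fun a => (1 : Matrix (Fin p) (Fin p) R) (v a))).det
        = ((Equiv.Perm.sign σ : ℤ) : R) := by
    have : (fun a => (1 : Matrix (Fin p) (Fin p) R) (v a)) =
        (fun a => (1 : Matrix (Fin p) (Fin p) R) (s₀.1 a)) ∘ σ := by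
      rw [← hcomp]; rfl
    rw [this, det_N_comp_perm _ s₀.2.injective _ σ, N_self, Matrix.det_one, mul_one]
  have hD1 : D1 A r hr (fun a => (1 : Matrix (Fin p) (Fin p) R) (v a)) =
      (N A r (fun a => (1 : Matrix (Fin p) (Fin p) R) (s₀.1 a))).det *
        ((Equiv.Perm.sign σ : ℤ) : R) := by
    show (∑ s : Smono k p, _) = _
    rw [Finset.sum_eq_single s₀ (fun s _ hs => by rw [hδ s hs, mul_zero])
      (fun h => absurd (Finset.mem_univ s₀) h), hs₀term]
  rw [hD1, hD2, mul_comm]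

theorem laplace (A : Matrix (Fin p) (Fin p) R) (r : Fin k → Fin p) (hr : Function.Injective r) :
    ∑ s : Smono k p, f A (1 : Matrix (Fin p) (Fin p) R) r s.1 = A.det := by
  have h := DFunLike.congr_fun (D1_eq_D2 A r hr) (fun b => A (r b))
  have h2 : D2 A r hr (fun b => A (r b)) = A.det := by
    show (N A r (fun b => A (r b))).det = A.det
    rw [N_self]
  rw [h2] at h
  rw [← h]
  rfl


theorem F_apply (A : Matrix (Fin p) (Fin p) R) (r : Fin k → Fin p) (hr : StrictMono r)
    (y : Matrix (Fin p) (Fin p) R) :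
    F A r hr (fun i => y i) = ∑ s : Smono k p, f A y r s.1 := rfl

end PlueckerAux

open PlueckerAux in
/-- Plücker relation for determinants: for `p×p` matrices `A`, `B` over a commutative ring
and a strictly increasing sequence of row indices `r : Fin k → Fin p` (with `1 ≤ k ≤ p`),
`det A · det B` equals the sum over all strictly increasing `s : Fin k → Fin p` of the
product of determinants obtained by exchanging the rows `r₁,…,r_k` of `A` with the rows
`s₁,…,s_k` of `B` (in order). -/
theorem pluecker_relation {R : Type*} [CommRing R] (p k : ℕ) (hk : 1 ≤ k) (hkp : k ≤ p)
    (A B : Matrix (Fin p) (Fin p) R) (r : Fin k → Fin p) (hr : StrictMono r) :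
    A.det * B.det =
      ∑ s : {s : Fin k → Fin p // StrictMono s},
        (Matrix.det (Matrix.of fun i j =>
            if h : ∃ a, r a = i then B (s.1 h.choose) j else A i j)) *
        (Matrix.det (Matrix.of fun i j =>
            if h : ∃ a, s.1 a = i then A (r h.choose) j else B i j)) := by
  classical
  have hF := (F A r hr).eq_smul_basis_det (Pi.basisFun R (Fin p))
  have hFB := DFunLike.congr_fun hF (fun i => B i)
  have h1 : F A r hr (fun i => B i) = ∑ s : Smono k p, f A B r s.1 := rfl
  have h2 : F A r hr ⇑(Pi.basisFun R (Fin p)) = A.det := by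
    rw [basisFun_rows]
    have : F A r hr (fun i => (1 : Matrix (Fin p) (Fin p) R) i)
        = ∑ s : Smono k p, f A (1 : Matrix (Fin p) (Fin p) R) r s.1 := rfl
    rw [this]
    exact laplace A r hr.injective
  have h3 : (Pi.basisFun R (Fin p)).det (fun i => B i) = B.det := by
    rw [Pi.basisFun_det]
    rfl
  rw [AlternatingMap.smul_apply, h1, h2, h3, smul_eq_mul] at hFB
  have h4 : (∑ s : Smono k p, f A B r s.1) =
      ∑ s : {s : Fin k → Fin p // StrictMono s},
        (Matrix.det (Matrix.of fun i j =>
            if h : ∃ a, r a = i then B (s.1 h.choose) j else A i j)) *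
        (Matrix.det (Matrix.of fun i j =>
            if h : ∃ a, s.1 a = i then A (r h.choose) j else B i j)) := rfl
  rw [← h4, hFB]
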